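/- Let l ≥ 2 be an integer and let n₁, n_k be integers with 1 ≤ n₁ ≤ l − 1, n_k ≥ l + 1, n₁ + n_k = 2l, and let a₁, a_k ≥ 0, b > 0 reals with n₁a₁ + n_k a_k ≤ 2lb and a₁a_k ≤ l²b²/(n₁n_k). If additionally n₁n_k ≥ 3, then C(n₁,2)·n_k·a₁²·a_k + C(n_k,2)·n₁·a_k²·a₁ < l²(l−1)·b³. -/

import Mathlib

set_option maxHeartbeats 1000000


theorem stmt_15 (l n₁ nk : ℕ) (hl : 2 ≤ l) (hn₁ : 1 ≤ n₁) (hn₁l : n₁ ≤ l - 1)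
    (hnk : l + 1 ≤ nk) (hsum : n₁ + nk = 2 * l)
    (a₁ ak b : ℝ) (ha₁ : 0 ≤ a₁) (hak : 0 ≤ ak) (hb : 0 < b)
    (h1 : (n₁ : ℝ) * a₁ + nk * ak ≤ 2 * l * b)
    (h2 : a₁ * ak ≤ (l : ℝ) ^ 2 * b ^ 2 / (n₁ * nk))
    (h3 : 3 ≤ n₁ * nk) :
    ((n₁ : ℝ) * ((n₁ : ℝ) - 1) / 2) * nk * a₁ ^ 2 * ak +
      ((nk : ℝ) * ((nk : ℝ) - 1) / 2) * n₁ * ak ^ 2 * a₁ <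
      (l : ℝ) ^ 2 * ((l : ℝ) - 1) * b ^ 3 := by
  have hl2 : (2:ℝ) ≤ (l:ℝ) := by exact_mod_cast hl
  have hn₁R : (1:ℝ) ≤ (n₁:ℝ) := by exact_mod_cast hn₁
  have hn₁lR : (n₁:ℝ) ≤ (l:ℝ) - 1 := by
    have h : n₁ + 1 ≤ l := by omega
    have := (Nat.cast_le (α := ℝ)).2 h
    push_cast at this; linarith
  have hnkR : (l:ℝ) + 1 ≤ (nk:ℝ) := by exact_mod_cast hnk
  have hsumR : (n₁:ℝ) + (nk:ℝ) = 2*(l:ℝ) := by exact_mod_cast hsum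
  set N : ℝ := (n₁:ℝ) * (nk:ℝ) with hNdef
  have hN3 : (3:ℝ) ≤ N := by rw [hNdef]; exact_mod_cast h3
  have hN0 : (0:ℝ) < N := by linarith
  have hNl : N ≤ (l:ℝ)^2 - 1 := by nlinarith [sq_nonneg ((l:ℝ) - (n₁:ℝ) - 1)]
  -- square roots
  set u : ℝ := Real.sqrt N with hudef
  have hu2 : u^2 = N := Real.sq_sqrt hN0.le
  have hu0' : 0 ≤ u := Real.sqrt_nonneg N
  have hu32 : (3:ℝ)/2 ≤ u := by nlinarith
  have hu0 : 0 < u := by linarith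
  have hul : u < (l:ℝ) := by nlinarith
  set t : ℝ := Real.sqrt (a₁*ak) with htdef
  have ht2 : t^2 = a₁*ak := Real.sq_sqrt (mul_nonneg ha₁ hak)
  have ht0 : 0 ≤ t := Real.sqrt_nonneg _
  have hst : 2*t ≤ a₁ + ak := by nlinarith [sq_nonneg (a₁ - ak), sq_nonneg (a₁ + ak - 2*t)]
  have h2' : N * (a₁*ak) ≤ (l:ℝ)^2 * b^2 := by
    have := (le_div_iff₀ hN0).mp h2
    linarith
  have hlb0 : 0 < (l:ℝ)*b := by positivity
  have htu : u * t ≤ (l:ℝ) * b := by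
    have hsq : (u*t)^2 ≤ ((l:ℝ)*b)^2 := by
      calc (u*t)^2 = N * (a₁*ak) := by rw [← hu2, ← ht2]; ring
      _ ≤ (l:ℝ)^2 * b^2 := h2'
      _ = ((l:ℝ)*b)^2 := by ring
    have h := Real.sqrt_le_sqrt hsq
    rwa [Real.sqrt_sq (by positivity), Real.sqrt_sq hlb0.le] at h
  set T : ℝ := (l:ℝ)*b/u with hTdef
  have huT : u * T = (l:ℝ)*b := by rw [hTdef]; field_simp [hu0.ne']
  have htT : t ≤ T := by
    rw [hTdef, le_div_iff₀ hu0, mul_comm]; exact htu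
  have hT0 : 0 < T := by positivity
  have hT23 : (3:ℝ)/2 * T ≤ (l:ℝ)*b := by nlinarith
  have hTb : b < T := by
    have : u * b < u * T := by rw [huT]; nlinarith
    exact lt_of_mul_lt_mul_left this hu0.le
  have hNT : N * T^2 = (l:ℝ)^2 * b^2 := by
    calc N * T^2 = (u*T)^2 := by rw [← hu2]; ring
    _ = ((l:ℝ)*b)^2 := by rw [huT]
    _ = (l:ℝ)^2 * b^2 := by ring
  -- rewrite LHS
  have hLHS : ((n₁ : ℝ) * ((n₁ : ℝ) - 1) / 2) * nk * a₁ ^ 2 * ak +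
      ((nk : ℝ) * ((nk : ℝ) - 1) / 2) * n₁ * ak ^ 2 * a₁
      = N * (a₁*ak) / 2 * (((n₁:ℝ)*a₁ + (nk:ℝ)*ak) - (a₁ + ak)) := by
    rw [hNdef]; ring
  rw [hLHS, ← ht2]
  have step1 : N * t^2 / 2 * (((n₁:ℝ)*a₁ + (nk:ℝ)*ak) - (a₁ + ak))
      ≤ N * t^2 * ((l:ℝ)*b - t) := by
    have h0 : 0 ≤ N * t^2 / 2 := by positivity
    have hc : (((n₁:ℝ)*a₁ + (nk:ℝ)*ak) - (a₁ + ak)) ≤ 2*((l:ℝ)*b - t) := by linarith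
    nlinarith [mul_le_mul_of_nonneg_left hc h0]
  have hfac : 0 ≤ (l:ℝ)*b*(T+t) - (T^2 + T*t + t^2) := by
    nlinarith [mul_nonneg (sub_nonneg.2 htT) ht0, sq_nonneg (T - t),
      mul_nonneg (sub_nonneg.2 htT) (sub_nonneg.2 htT)]
  have step2 : N * t^2 * ((l:ℝ)*b - t) ≤ N * T^2 * ((l:ℝ)*b - T) := by
    have hid : N * T^2 * ((l:ℝ)*b - T) - N * t^2 * ((l:ℝ)*b - t)
        = N * (T - t) * ((l:ℝ)*b*(T+t) - (T^2 + T*t + t^2)) := by ring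
    have hpos := mul_nonneg (mul_nonneg hN0.le (sub_nonneg.2 htT)) hfac
    linarith
  have step3 : N * T^2 * ((l:ℝ)*b - T) < (l:ℝ)^2 * ((l:ℝ)-1) * b^3 := by
    rw [hNT]
    have hp : (0:ℝ) < (l:ℝ)^2*b^2 := by positivity
    nlinarith [mul_lt_mul_of_pos_left hTb hp]
  linarith
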